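/- Let p be a prime and A a set of p nonnegative integers that is NOT of the form {a + i·p^s + k_i·p^{s+1} : i = 0, ..., p−1} for any integers a ≥ 0, s ≥ 0, k_i. Then for every additive complement B of A, lim_{x→∞}(A(x)B(x) − x) = +∞. -/

import Mathlib

open Finset

noncomputable def cnt (S : Set ℕ) (x : ℕ) : ℕ := (S ∩ Set.Iic x).ncard

noncomputable def rep (A B : Set ℕ) (n : ℕ) : ℕ :=
  {q : ℕ × ℕ | q.1 ∈ A ∧ q.2 ∈ B ∧ q.1 + q.2 = n}.ncard

lemma cnt_coe (A : Finset ℕ) (x : ℕ) : cnt ↑A x = (A.filter (fun a => a ≤ x)).card := by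
  rw [cnt, show (↑A : Set ℕ) ∩ Set.Iic x = ↑(A.filter (fun a => a ≤ x)) by
    ext m; simp [Set.mem_Iic]]
  exact Set.ncard_coe_finset _

lemma cnt_set (B : Set ℕ) [DecidablePred (· ∈ B)] (x : ℕ) :
    cnt B x = ((Finset.Iic x).filter (fun m => m ∈ B)).card := by
  rw [cnt, show B ∩ Set.Iic x = ↑((Finset.Iic x).filter (fun m => m ∈ B)) by
    ext m; simp [Set.mem_Iic, and_comm]]
  exact Set.ncard_coe_finset _

lemma rep_card (A : Finset ℕ) (B : Set ℕ) [DecidablePred (· ∈ B)] (n : ℕ) :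
    rep ↑A B n = (A.filter (fun a => a ≤ n ∧ n - a ∈ B)).card := by
  rw [rep, show {q : ℕ × ℕ | q.1 ∈ (↑A : Set ℕ) ∧ q.2 ∈ B ∧ q.1 + q.2 = n}
      = (fun a => (a, n - a)) '' ↑(A.filter (fun a => a ≤ n ∧ n - a ∈ B)) by
    ext ⟨a, b⟩
    simp only [Set.mem_setOf_eq, Set.mem_image, Finset.coe_filter, Set.mem_setOf_eq,
      Prod.mk.injEq]
    constructor
    · rintro ⟨ha, hb, hab⟩
      exact ⟨a, ⟨ha, by omega, by rw [show n - a = b by omega]; exact hb⟩, rfl, by omega⟩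
    · rintro ⟨a', ⟨ha', hle, hB⟩, rfl, rfl⟩
      exact ⟨ha', hB, by omega⟩]
  rw [Set.ncard_image_of_injOn (fun x _ y _ h => by simpa using congrArg Prod.fst h)]
  exact Set.ncard_coe_finset _

lemma rep_sum (A : Finset ℕ) (B : Set ℕ) [DecidablePred (· ∈ B)] (n : ℕ) :
    rep ↑A B n = ∑ a ∈ A, if a ≤ n ∧ n - a ∈ B then 1 else 0 := by
  rw [rep_card, Finset.card_filter]

lemma sum_rep_le (A : Finset ℕ) (B : Set ℕ) [DecidablePred (· ∈ B)] (x : ℕ) :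
    ∑ n ∈ Finset.Iic x, rep ↑A B n ≤ cnt ↑A x * cnt B x := by
  have h1 : ∑ n ∈ Finset.Iic x, rep ↑A B n
      = ∑ a ∈ A, ((Finset.Iic x).filter (fun n => a ≤ n ∧ n - a ∈ B)).card := by
    simp only [rep_sum]
    rw [Finset.sum_comm]
    exact Finset.sum_congr rfl fun a _ => (Finset.card_filter _ _).symm
  rw [h1]
  have h2 : ∀ a ∈ A, ((Finset.Iic x).filter (fun n => a ≤ n ∧ n - a ∈ B)).card
      ≤ if a ≤ x then cnt B x else 0 := by
    intro a _
    split_ifs with hax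
    · rw [cnt_set]
      apply Finset.card_le_card_of_injOn (fun n => n - a)
      · intro n hn
        simp only [Finset.mem_coe, Finset.mem_filter, Finset.mem_Iic] at hn ⊢
        exact ⟨by omega, hn.2.2⟩
      · intro n hn m hm h
        simp only [Finset.coe_filter, Set.mem_setOf_eq, Finset.mem_Iic] at hn hm
        simp only [] at h
        omega
    · have he : (Finset.Iic x).filter (fun n => a ≤ n ∧ n - a ∈ B) = ∅ := by
        rw [Finset.filter_eq_empty_iff]
        intro n hn
        simp only [Finset.mem_Iic] at hn
        omega
      simp [he]
  calc ∑ a ∈ A, ((Finset.Iic x).filter (fun n => a ≤ n ∧ n - a ∈ B)).card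
      ≤ ∑ a ∈ A, (if a ≤ x then cnt B x else 0) := Finset.sum_le_sum h2
    _ = (A.filter (fun a => a ≤ x)).card * cnt B x := by
        rw [Finset.sum_ite, Finset.sum_const, Finset.sum_const]; simp [mul_comm]
    _ = cnt ↑A x * cnt B x := by rw [cnt_coe]

lemma window_const {M : Type*} [AddCancelCommMonoid M] (u : ℕ → M) (T M₀ : ℕ)
    (hu : ∀ m, M₀ ≤ m → u (m + T) = u m) :
    ∀ y, M₀ ≤ y → ∑ i ∈ Finset.range T, u (y + i) = ∑ i ∈ Finset.range T, u (M₀ + i) := by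
  intro y hy
  induction y, hy using Nat.le_induction with
  | base => rfl
  | succ y hy ih =>
    have key : ∑ i ∈ Finset.range T, u (y + i) + u (y + T)
        = u y + ∑ i ∈ Finset.range T, u (y + 1 + i) := by
      rw [← Finset.sum_range_succ (fun i => u (y + i)) T]
      rw [Finset.sum_range_succ' (fun i => u (y + i)) T]
      rw [show ∑ i ∈ Finset.range T, u (y + (i + 1)) = ∑ i ∈ Finset.range T, u (y + 1 + i)
        from Finset.sum_congr rfl fun i _ => by rw [show y + (i+1) = y+1+i by omega]]
      rw [add_zero, add_comm]
    rw [hu y hy] at key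
    have : ∑ i ∈ Finset.range T, u (y + 1 + i) = ∑ i ∈ Finset.range T, u (y + i) := by
      have := key.symm
      rwa [add_comm (u y), add_right_cancel_iff] at this
    rw [this, ih]

section tile

variable (A : Finset ℕ) (hA : A.Nonempty) (χ : ℕ → ℕ) (T M₀ : ℕ)

lemma tile_identity (hAM : A.max' hA ≤ M₀)
    (htile : ∀ n, M₀ ≤ n → ∑ a ∈ A, χ (n - a) = 1)
    (hper : ∀ m, M₀ ≤ m → χ (m + T) = χ m)
    (ζ : ℂ) (hζ1 : ζ ≠ 1) (hζT : ζ ^ T = 1) :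
    (∑ a ∈ A, ζ ^ a) * (∑ i ∈ Finset.range T, (χ (M₀ + i) : ℂ) * ζ ^ (M₀ + i)) = 0 := by
  set amax := A.max' hA with hamax
  set N := M₀ + amax with hN
  set u : ℕ → ℂ := fun m => (χ m : ℂ) * ζ ^ m with hu
  have huper : ∀ m, M₀ ≤ m → u (m + T) = u m := by
    intro m hm
    simp only [hu, hper m hm, pow_add, hζT, mul_one]
  have hgeom : ∑ i ∈ Finset.range T, ζ ^ (N + i) = 0 := by
    have : ∑ i ∈ Finset.range T, ζ ^ (N + i) = ζ ^ N * ∑ i ∈ Finset.range T, ζ ^ i := by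
      rw [Finset.mul_sum]; exact Finset.sum_congr rfl fun i _ => by rw [pow_add]
    rw [this, geom_sum_eq hζ1, hζT]
    simp
  have hmain : ∑ i ∈ Finset.range T, ζ ^ (N + i)
      = (∑ a ∈ A, ζ ^ a) * (∑ i ∈ Finset.range T, u (M₀ + i)) := by
    calc ∑ i ∈ Finset.range T, ζ ^ (N + i)
        = ∑ i ∈ Finset.range T, ((∑ a ∈ A, χ (N + i - a) : ℕ) : ℂ) * ζ ^ (N + i) := by
          refine Finset.sum_congr rfl fun i _ => ?_
          rw [htile (N + i) (by omega)]
          simp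
      _ = ∑ i ∈ Finset.range T, ∑ a ∈ A, (χ (N + i - a) : ℂ) * ζ ^ (N + i) := by
          refine Finset.sum_congr rfl fun i _ => ?_
          rw [Nat.cast_sum, Finset.sum_mul]
      _ = ∑ a ∈ A, ∑ i ∈ Finset.range T, (χ (N + i - a) : ℂ) * ζ ^ (N + i) :=
          Finset.sum_comm
      _ = ∑ a ∈ A, ζ ^ a * ∑ i ∈ Finset.range T, u (N - a + i) := by
          refine Finset.sum_congr rfl fun a ha => ?_
          rw [Finset.mul_sum]
          refine Finset.sum_congr rfl fun i _ => ?_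
          have haN : a ≤ N := le_trans (A.le_max' a ha) (by omega)
          have h1 : N + i - a = N - a + i := by omega
          have h2 : ζ ^ (N + i) = ζ ^ a * ζ ^ (N - a + i) := by
            rw [← pow_add]
            congr 1
            omega
          rw [h1, h2, hu]
          ring
      _ = ∑ a ∈ A, ζ ^ a * ∑ i ∈ Finset.range T, u (M₀ + i) := by
          refine Finset.sum_congr rfl fun a ha => ?_
          congr 1
          exact window_const u T M₀ huper (N - a)
            (by have := A.le_max' a ha; omega)
      _ = (∑ a ∈ A, ζ ^ a) * (∑ i ∈ Finset.range T, u (M₀ + i)) := by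
          rw [Finset.sum_mul]
  rw [← hmain, hgeom]

lemma tile_count (hAM : A.max' hA ≤ M₀)
    (htile : ∀ n, M₀ ≤ n → ∑ a ∈ A, χ (n - a) = 1)
    (hper : ∀ m, M₀ ≤ m → χ (m + T) = χ m) :
    T = A.card * ∑ i ∈ Finset.range T, χ (M₀ + i) := by
  set amax := A.max' hA with hamax
  set N := M₀ + amax with hN
  calc T = ∑ i ∈ Finset.range T, (1 : ℕ) := by simp
    _ = ∑ i ∈ Finset.range T, ∑ a ∈ A, χ (N + i - a) := by
        refine Finset.sum_congr rfl fun i _ => (htile (N + i) (by omega)).symm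
    _ = ∑ a ∈ A, ∑ i ∈ Finset.range T, χ (N + i - a) := Finset.sum_comm
    _ = ∑ a ∈ A, ∑ i ∈ Finset.range T, χ (N - a + i) := by
        refine Finset.sum_congr rfl fun a ha => Finset.sum_congr rfl fun i _ => ?_
        have := A.le_max' a ha
        congr 1
        omega
    _ = ∑ a ∈ A, ∑ i ∈ Finset.range T, χ (M₀ + i) := by
        refine Finset.sum_congr rfl fun a ha => ?_
        exact window_const χ T M₀ hper (N - a) (by have := A.le_max' a ha; omega)
    _ = A.card * ∑ i ∈ Finset.range T, χ (M₀ + i) := by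
        rw [Finset.sum_const, smul_eq_mul]

end tile

lemma periodicity (A : Finset ℕ) (hA : A.Nonempty) (hA2 : 1 < A.card)
    (χ : ℕ → ℕ) (R : ℕ) (hR : A.max' hA ≤ R)
    (htile : ∀ n, R ≤ n → ∑ a ∈ A, χ (n - a) = 1) :
    ∃ T, 1 ≤ T ∧ ∃ M₀, R ≤ M₀ ∧ ∀ m, M₀ ≤ m → χ (m + T) = χ m := by
  set amin := A.min' hA with hamin
  set amax := A.max' hA with hamax
  have haminA : amin ∈ A := A.min'_mem hA
  have hamaxA : amax ∈ A := A.max'_mem hA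
  have hminmax : amin < amax := Finset.min'_lt_max'_of_card A hA2
  set D := amax - amin with hD
  have hD1 : 1 ≤ D := by omega
  -- boundedness of χ
  have hb : ∀ m, R ≤ m → χ m ≤ 1 := by
    intro m hm
    have h := htile (m + amax) (by omega)
    have : χ (m + amax - amax) ≤ ∑ a ∈ A, χ (m + amax - a) :=
      Finset.single_le_sum (f := fun a => χ (m + amax - a)) (fun a _ => Nat.zero_le _) hamaxA
    simp only [Nat.add_sub_cancel] at this
    omega
  -- pigeonhole
  set st : ℕ → (Fin D → Bool) := fun q => fun i => decide (χ (R + q + ↑i) = 1) with hst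
  obtain ⟨q₁', q₂', hne, heq⟩ := Finite.exists_ne_map_eq_of_infinite st
  -- wlog q₁ < q₂
  obtain ⟨q₁, q₂, hlt, heq'⟩ : ∃ q₁ q₂, q₁ < q₂ ∧ st q₁ = st q₂ := by
    rcases lt_or_gt_of_ne hne with h | h
    · exact ⟨q₁', q₂', h, heq⟩
    · exact ⟨q₂', q₁', h, heq.symm⟩
  set T := q₂ - q₁ with hT
  refine ⟨T, by omega, R + q₁, by omega, ?_⟩
  have hwin : ∀ i, i < D → χ (R + q₁ + i) = χ (R + q₁ + i + T) := by
    intro i hi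
    have := congrFun heq' ⟨i, hi⟩
    simp only [hst, decide_eq_decide] at this
    have h1 : χ (R + q₁ + i) ≤ 1 := hb _ (by omega)
    have h2 : χ (R + q₂ + i) ≤ 1 := hb _ (by omega)
    have he : R + q₁ + i + T = R + q₂ + i := by omega
    rw [he]
    omega
  intro m hm
  induction m using Nat.strong_induction_on with
  | _ m ih =>
    by_cases hcase : m < R + q₁ + D
    · have hi : m - (R + q₁) < D := by omega
      have := hwin (m - (R + q₁)) hi
      have he : R + q₁ + (m - (R + q₁)) = m := by omega
      rw [he] at this
      omega
    · push_neg at hcase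
      -- use recurrence at n = m + amin and n = m + T + amin
      have h1 := htile (m + amin) (by omega)
      have h2 := htile (m + T + amin) (by omega)
      rw [← Finset.add_sum_erase _ _ haminA] at h1 h2
      have hterm : ∀ a ∈ A.erase amin,
          χ (m + T + amin - a) = χ (m + amin - a) := by
        intro a ha
        have haA : a ∈ A := Finset.mem_of_mem_erase ha
        have hane : a ≠ amin := Finset.ne_of_mem_erase ha
        have hge : amin ≤ a := A.min'_le a haA
        have hle : a ≤ amax := A.le_max' a haA
        have harg : m + amin - a < m := by omega
        have harg2 : R + q₁ ≤ m + amin - a := by omega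
        have he : m + T + amin - a = (m + amin - a) + T := by omega
        rw [he]
        exact ih (m + amin - a) harg harg2
      have hsum : ∑ a ∈ A.erase amin, χ (m + T + amin - a)
          = ∑ a ∈ A.erase amin, χ (m + amin - a) :=
        Finset.sum_congr rfl hterm
      simp only [Nat.add_sub_cancel] at h1 h2
      omega

lemma L1 (p k : ℕ) (hp : p.Prime) (hk : 1 ≤ k) (ζ : ℂ) (hζ : IsPrimitiveRoot ζ (p ^ k))
    (c : ℕ → ℤ) (hsum : ∑ j ∈ Finset.range (p ^ k), (c j : ℂ) * ζ ^ j = 0) :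
    ∀ j j', j < p ^ k → j' < p ^ k → j % p ^ (k - 1) = j' % p ^ (k - 1) → c j = c j' := by
  have hppos : 0 < p := hp.pos
  have hks : k = (k - 1) + 1 := by omega
  set s := k - 1 with hs
  have hpk : 0 < p ^ k := pow_pos hppos k
  have hps : 0 < p ^ s := pow_pos hppos s
  have hpks : p ^ k = p ^ s * p := by rw [hks]; rw [pow_succ]
  set P : Polynomial ℤ := ∑ j ∈ Finset.range (p ^ k), Polynomial.C (c j) * Polynomial.X ^ j
    with hP
  have haeval : Polynomial.aeval ζ P = 0 := by
    rw [hP, map_sum]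
    simp only [map_mul, map_pow, Polynomial.aeval_C, Polynomial.aeval_X, algebraMap_int_eq,
      Int.coe_castRingHom]
    exact hsum
  have hmin : Polynomial.cyclotomic (p ^ k) ℤ = minpoly ℤ ζ :=
    Polynomial.cyclotomic_eq_minpoly hζ hpk
  have hint : IsIntegral ℤ ζ := hζ.isIntegral hpk
  have hdvd : Polynomial.cyclotomic (p ^ k) ℤ ∣ P := by
    rw [hmin]; exact minpoly.isIntegrallyClosed_dvd hint haeval
  obtain ⟨h, hPh⟩ := hdvd
  have hΦne : Polynomial.cyclotomic (p ^ k) ℤ ≠ 0 := Polynomial.cyclotomic_ne_zero _ ℤ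
  have hdegΦ : (Polynomial.cyclotomic (p ^ k) ℤ).natDegree = p ^ k - p ^ s := by
    rw [Polynomial.natDegree_cyclotomic]
    rw [hks, Nat.totient_prime_pow hp (Nat.succ_pos s)]
    have h2 : p ^ s ≤ p ^ s * p := Nat.le_mul_of_pos_right _ hppos
    rw [Nat.succ_sub_one, pow_succ]
    zify [hp.one_le, h2]
    ring
  have hPdeg : P.natDegree ≤ p ^ k - 1 := by
    rw [hP]
    apply Polynomial.natDegree_sum_le_of_forall_le
    intro j hj
    refine le_trans (Polynomial.natDegree_C_mul_X_pow_le _ _) ?_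
    simp only [Finset.mem_range] at hj
    omega
  have hPcoeff : ∀ j, j < p ^ k → P.coeff j = c j := by
    intro j hj
    rw [hP, Polynomial.finset_sum_coeff]
    simp only [Polynomial.coeff_C_mul, Polynomial.coeff_X_pow, mul_ite, mul_one, mul_zero]
    rw [Finset.sum_ite_eq (Finset.range (p ^ k)) j c]
    simp [hj]
  have hcoeffh : ∀ d, p ^ s ≤ d → h.coeff d = 0 := by
    intro d hd
    by_cases hh0 : h = 0
    · simp [hh0]
    have hdm := Polynomial.natDegree_mul hΦne hh0
    rw [← hPh, hdegΦ] at hdm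
    apply Polynomial.coeff_eq_zero_of_natDegree_lt
    have h2 : p ^ s ≤ p ^ k := by rw [hpks]; exact Nat.le_mul_of_pos_right _ hppos
    omega
  have hkey : ∀ j, j < p ^ k → c j = h.coeff (j % p ^ s) := by
    intro j hj
    have e1 : P = (∑ i ∈ Finset.range p, ((Polynomial.X : Polynomial ℤ) ^ p ^ s) ^ i) * h := by
      rw [hPh]
      congr 1
      rw [hks]
      exact Polynomial.cyclotomic_prime_pow_eq_geom_sum hp
    have e2 : P.coeff j
        = ∑ i ∈ Finset.range p, if p ^ s * i ≤ j then h.coeff (j - p ^ s * i) else 0 := by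
      rw [e1, Finset.sum_mul, Polynomial.finset_sum_coeff]
      refine Finset.sum_congr rfl fun i _ => ?_
      rw [← pow_mul, mul_comm ((Polynomial.X : Polynomial ℤ) ^ (p ^ s * i)) h,
        Polynomial.coeff_mul_X_pow']
    set i₀ := j / p ^ s with hi₀
    have hi0d : p ^ s * i₀ + j % p ^ s = j := by
      rw [hi₀]; exact Nat.div_add_mod j (p ^ s)
    have hmlt : j % p ^ s < p ^ s := Nat.mod_lt j hps
    have hi₀p : i₀ < p := by
      rw [hi₀]
      rw [Nat.div_lt_iff_lt_mul hps]
      calc j < p ^ k := hj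
        _ = p * p ^ s := by rw [hpks]; ring
    have f0 : j = j % p ^ s + p ^ s * i₀ := by
      conv_lhs => rw [← hi0d]
      exact Nat.add_comm _ _
    have f1 : p ^ s * i₀ ≤ j := Nat.le.intro hi0d
    have f2 : j - p ^ s * i₀ = j % p ^ s := Nat.sub_eq_of_eq_add f0
    have f5 : j < p ^ s * i₀ + p ^ s := by
      conv_lhs => rw [← hi0d]
      exact Nat.add_lt_add_left hmlt _
    have hsum0 : ∑ i ∈ Finset.range p, (if p ^ s * i ≤ j then h.coeff (j - p ^ s * i) else 0)
        = h.coeff (j % p ^ s) := by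
      rw [Finset.sum_eq_single i₀]
      · rw [if_pos f1, f2]
      · intro i hi hne
        rcases lt_or_gt_of_ne hne with hlt | hgt
        · have h3 : p ^ s * (i + 1) ≤ p ^ s * i₀ := Nat.mul_le_mul_left _ (by omega)
          have h4 : p ^ s * (i + 1) = p ^ s * i + p ^ s := by ring
          have f3 : p ^ s * i + p ^ s ≤ j := le_trans (le_of_eq h4.symm) (le_trans h3 f1)
          rw [if_pos (by omega)]
          apply hcoeffh
          omega
        · have h3 : p ^ s * (i₀ + 1) ≤ p ^ s * i := Nat.mul_le_mul_left _ (by omega)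
          have h4 : p ^ s * (i₀ + 1) = p ^ s * i₀ + p ^ s := by ring
          have f3 : p ^ s * i₀ + p ^ s ≤ p ^ s * i := le_trans (le_of_eq h4.symm) h3
          rw [if_neg (by omega)]
      · intro h'; exact absurd (Finset.mem_range.mpr hi₀p) h'
    rw [← hPcoeff j hj, e2, hsum0]
  intro j j' hj hj' hmod
  rw [hkey j hj, hkey j' hj', hmod]

lemma const_of_vanish (p k : ℕ) (hp : p.Prime) (hk : 1 ≤ k) (ζ : ℂ)
    (hζ : IsPrimitiveRoot ζ (p ^ k)) (S : Finset ℕ) (hv : ∑ i ∈ S, ζ ^ i = 0) :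
    ∀ j j', j < p ^ k → j' < p ^ k → j % p ^ (k - 1) = j' % p ^ (k - 1) →
      (S.filter (fun m => m % p ^ k = j)).card = (S.filter (fun m => m % p ^ k = j')).card := by
  classical
  have hpk : 0 < p ^ k := pow_pos hp.pos k
  have hζpk : ζ ^ p ^ k = 1 := hζ.pow_eq_one
  have hmodpow : ∀ m : ℕ, ζ ^ m = ζ ^ (m % p ^ k) := by
    intro m
    conv_lhs => rw [← Nat.div_add_mod m (p ^ k)]
    rw [pow_add, pow_mul, hζpk, one_pow, one_mul]
  have hfib : ∑ j ∈ Finset.range (p ^ k),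
      (((S.filter (fun m => m % p ^ k = j)).card : ℤ) : ℂ) * ζ ^ j = 0 := by
    have hterm : ∀ j, (((S.filter (fun m => m % p ^ k = j)).card : ℤ) : ℂ) * ζ ^ j
        = ∑ m ∈ S, if m % p ^ k = j then ζ ^ j else 0 := by
      intro j
      rw [Finset.card_filter]
      push_cast
      rw [Finset.sum_mul]
      refine Finset.sum_congr rfl fun m _ => ?_
      split_ifs <;> simp
    calc ∑ j ∈ Finset.range (p ^ k), (((S.filter (fun m => m % p ^ k = j)).card : ℤ) : ℂ) * ζ ^ j
        = ∑ j ∈ Finset.range (p ^ k), ∑ m ∈ S, if m % p ^ k = j then ζ ^ j else 0 :=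
          Finset.sum_congr rfl fun j _ => hterm j
      _ = ∑ m ∈ S, ∑ j ∈ Finset.range (p ^ k), if m % p ^ k = j then ζ ^ j else 0 :=
          Finset.sum_comm
      _ = ∑ m ∈ S, ζ ^ (m % p ^ k) := by
          refine Finset.sum_congr rfl fun m _ => ?_
          rw [Finset.sum_ite_eq (Finset.range (p ^ k)) (m % p ^ k) (fun j => ζ ^ j)]
          simp [Nat.mod_lt m hpk]
      _ = ∑ m ∈ S, ζ ^ m := Finset.sum_congr rfl fun m _ => (hmodpow m).symm
      _ = 0 := hv
  intro j j' hj hj' hmod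
  have h2 : ((S.filter (fun m => m % p ^ k = j)).card : ℤ)
      = ((S.filter (fun m => m % p ^ k = j')).card : ℤ) :=
    L1 p k hp hk ζ hζ (fun j => ((S.filter (fun m => m % p ^ k = j)).card : ℤ))
      hfib j j' hj hj' hmod
  exact_mod_cast h2

lemma card_filter_split (p : ℕ) (hp : 0 < p) (k : ℕ) (S : Finset ℕ) (r : ℕ) (hr : r < p ^ k) :
    (S.filter (fun m => m % p ^ k = r)).card
      = ∑ i ∈ Finset.range p, (S.filter (fun m => m % p ^ (k + 1) = r + i * p ^ k)).card := by
  classical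
  have hps : 0 < p ^ k := pow_pos hp k
  simp only [Finset.card_filter]
  rw [Finset.sum_comm]
  refine Finset.sum_congr rfl fun m _ => ?_
  have hdvd : p ^ k ∣ p ^ (k + 1) := pow_dvd_pow p (by omega)
  have hmm : m % p ^ (k + 1) % p ^ k = m % p ^ k := Nat.mod_mod_of_dvd m hdvd
  by_cases hc : m % p ^ k = r
  · rw [if_pos hc]
    set i₀ := m % p ^ (k + 1) / p ^ k with hi₀
    have hi₀p : i₀ < p := by
      rw [hi₀, Nat.div_lt_iff_lt_mul hps]
      calc m % p ^ (k + 1) < p ^ (k + 1) := Nat.mod_lt m (pow_pos hp _)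
        _ = p * p ^ k := by rw [pow_succ]; ring
    have hda := Nat.div_add_mod (m % p ^ (k + 1)) (p ^ k)
    rw [hmm, hc] at hda
    have hrep : m % p ^ (k + 1) = r + i₀ * p ^ k := by
      rw [← hda]; ring
    symm
    rw [Finset.sum_eq_single i₀]
    · rw [if_pos hrep]
    · intro i hi hne
      rw [if_neg]
      intro hcontra
      apply hne
      have hmul : i * p ^ k = i₀ * p ^ k := by omega
      exact Nat.eq_of_mul_eq_mul_right hps hmul
    · intro h'; exact absurd (Finset.mem_range.mpr hi₀p) h'
  · rw [if_neg hc]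
    symm
    apply Finset.sum_eq_zero
    intro i hi
    rw [if_neg]
    intro hcontra
    apply hc
    rw [← hmm, hcontra, Nat.add_mul_mod_self_right, Nat.mod_eq_of_lt hr]

lemma chain_dvd (p : ℕ) (hp : p.Prime) (e : ℕ) (S : Finset ℕ)
    (hv : ∀ kk, 1 ≤ kk → kk ≤ e →
      ∑ i ∈ S, (Complex.exp (2 * Real.pi * Complex.I / ((p ^ kk : ℕ) : ℂ))) ^ i = 0) :
    p ^ e ∣ S.card := by
  classical
  have hppos := hp.pos
  have key : ∀ kk, kk ≤ e → ∀ j, j < p ^ kk →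
      S.card = p ^ kk * (S.filter (fun m => m % p ^ kk = j)).card := by
    intro kk
    induction kk with
    | zero =>
      intro _ j hj
      simp only [pow_zero] at hj
      have hj0 : j = 0 := by omega
      subst hj0
      simp [Nat.mod_one]
    | succ k ih =>
      intro hke j hj
      have hk1 : (1 : ℕ) ≤ k + 1 := by omega
      have hζ := Complex.isPrimitiveRoot_exp (p ^ (k + 1)) (by positivity)
      have hconst := const_of_vanish p (k + 1) hp hk1 _ hζ S (hv (k + 1) hk1 hke)
      simp only [Nat.add_sub_cancel] at hconst
      set r := j % p ^ k with hr
      have hrlt : r < p ^ k := Nat.mod_lt j (pow_pos hppos k)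
      have h1 : S.card = p ^ k * (S.filter (fun m => m % p ^ k = r)).card :=
        ih (by omega) r hrlt
      have h2 := card_filter_split p hppos k S r hrlt
      have h3 : ∀ i ∈ Finset.range p, (S.filter (fun m => m % p ^ (k + 1) = r + i * p ^ k)).card
          = (S.filter (fun m => m % p ^ (k + 1) = j)).card := by
        intro i hi
        simp only [Finset.mem_range] at hi
        apply hconst
        · have hA : i * p ^ k ≤ (p - 1) * p ^ k := Nat.mul_le_mul_right _ (by omega)
          have hB : (p - 1) * p ^ k + p ^ k = p * p ^ k := by
            have h1le := hp.one_le
            zify [h1le]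
            ring
          have hC : p ^ (k + 1) = p * p ^ k := by rw [pow_succ]; ring
          omega
        · exact hj
        · rw [Nat.add_mul_mod_self_right, Nat.mod_eq_of_lt hrlt]
      rw [Finset.sum_congr rfl h3, Finset.sum_const, Finset.card_range, smul_eq_mul] at h2
      rw [h1, h2, pow_succ]
      ring
  have h0 : (0 : ℕ) < p ^ e := pow_pos hppos e
  exact ⟨_, key e le_rfl 0 h0⟩

lemma sum_range_add' {M : Type*} [AddCommMonoid M] (f : ℕ → M) (a b : ℕ) :
    ∑ j ∈ Finset.range (a + b), f j
      = ∑ j ∈ Finset.range a, f j + ∑ i ∈ Finset.range b, f (a + i) := by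
  simp only [Finset.range_eq_Ico]
  rw [← Finset.sum_Ico_consecutive f (Nat.zero_le a) (Nat.le_add_right a b)]
  congr 1
  rw [Finset.sum_Ico_eq_sum_range]
  simp

lemma sum_range_mul' {M : Type*} [AddCommMonoid M] (f : ℕ → M) (m n : ℕ) :
    ∑ j ∈ Finset.range (n * m), f j
      = ∑ i ∈ Finset.range n, ∑ r ∈ Finset.range m, f (i * m + r) := by
  induction n with
  | zero => simp
  | succ n ih =>
    rw [Nat.succ_mul, sum_range_add' f (n * m) m, ih, Finset.sum_range_succ]

lemma struct (p : ℕ) (hp : p.Prime) (A : Finset ℕ) (hcard : A.card = p)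
    (kk : ℕ) (hk : 1 ≤ kk)
    (hvA : ∑ a ∈ A, (Complex.exp (2 * Real.pi * Complex.I / ((p ^ kk : ℕ) : ℂ))) ^ a = 0) :
    ∃ (a : ℤ), 0 ≤ a ∧ ∃ (s : ℕ) (kf : Fin p → ℤ),
      Finset.image (fun x : ℕ => (x : ℤ)) A =
        Finset.image (fun i : Fin p => a + (i : ℤ) * (p : ℤ) ^ s + kf i * (p : ℤ) ^ (s + 1))
          Finset.univ := by
  classical
  have hppos := hp.pos
  have hks : kk = (kk - 1) + 1 := by omega
  set s := kk - 1 with hs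
  have hps : 0 < p ^ s := pow_pos hppos s
  have hpk : 0 < p ^ kk := pow_pos hppos kk
  have hpks : p ^ kk = p ^ s * p := by rw [hks, pow_succ]
  have hζ := Complex.isPrimitiveRoot_exp (p ^ kk) (by positivity)
  have hconst := const_of_vanish p kk hp hk _ hζ A hvA
  set Nj : ℕ → ℕ := fun j => (A.filter (fun m => m % p ^ kk = j)).card with hNj
  have htot : ∑ j ∈ Finset.range (p ^ kk), Nj j = p := by
    have h1 : ∑ j ∈ Finset.range (p ^ kk), Nj j = ∑ m ∈ A, 1 := by
      simp only [hNj, Finset.card_filter]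
      rw [Finset.sum_comm]
      refine Finset.sum_congr rfl fun m _ => ?_
      rw [Finset.sum_ite_eq (Finset.range (p ^ kk)) (m % p ^ kk) (fun _ => 1)]
      simp [Nat.mod_lt m hpk]
    rw [h1, Finset.sum_const, smul_eq_mul, mul_one, hcard]
  have hconst' : ∀ j, j < p ^ kk → Nj j = Nj (j % p ^ s) := by
    intro j hj
    have hlt : j % p ^ s < p ^ kk :=
      lt_of_lt_of_le (Nat.mod_lt j hps) (by rw [hpks]; exact Nat.le_mul_of_pos_right _ hppos)
    exact hconst j (j % p ^ s) hj hlt (Nat.mod_mod_of_dvd j (dvd_refl _)).symm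
  have hsplit : ∑ j ∈ Finset.range (p ^ kk), Nj j
      = ∑ i ∈ Finset.range p, ∑ r ∈ Finset.range (p ^ s), Nj (i * p ^ s + r) := by
    rw [← sum_range_mul' Nj (p ^ s) p]
    congr 1
    rw [hpks]
    ring
  have hsum1 : ∑ r ∈ Finset.range (p ^ s), Nj r = 1 := by
    have h1 : ∀ i ∈ Finset.range p, ∑ r ∈ Finset.range (p ^ s), Nj (i * p ^ s + r)
        = ∑ r ∈ Finset.range (p ^ s), Nj r := by
      intro i hi
      refine Finset.sum_congr rfl fun r hr => ?_
      simp only [Finset.mem_range] at hi hr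
      have hlt1 : i * p ^ s + r < p ^ kk := by
        have hA : i * p ^ s ≤ (p - 1) * p ^ s := Nat.mul_le_mul_right _ (by omega)
        have hB : (p - 1) * p ^ s + p ^ s = p * p ^ s := by
          rw [Nat.sub_one_mul]
          have h5 : p ^ s ≤ p * p ^ s := Nat.le_mul_of_pos_left _ hppos
          omega
        have hC : p ^ kk = p * p ^ s := by rw [hpks]; ring
        omega
      have hlt2 : r < p ^ kk := by
        calc r < p ^ s := hr
          _ ≤ p ^ kk := by rw [hpks]; exact Nat.le_mul_of_pos_right _ hppos
      rw [hconst' _ hlt1, hconst' r hlt2]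
      congr 1
      rw [add_comm (i * p ^ s) r, Nat.add_mul_mod_self_right]
    rw [hsplit, Finset.sum_congr rfl h1, Finset.sum_const, Finset.card_range,
      smul_eq_mul] at htot
    exact Nat.eq_of_mul_eq_mul_left hppos (htot.trans (mul_one p).symm)
  have hne0 : ∑ r ∈ Finset.range (p ^ s), Nj r ≠ 0 := by rw [hsum1]; omega
  obtain ⟨r0, hr0mem, hr0ne⟩ := Finset.exists_ne_zero_of_sum_ne_zero hne0
  have hr0lt : r0 < p ^ s := Finset.mem_range.mp hr0mem
  have hsplit2 := Finset.add_sum_erase (Finset.range (p ^ s)) Nj hr0mem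
  rw [hsum1] at hsplit2
  have hr0one : Nj r0 = 1 := by omega
  have hr0zero : ∀ r, r < p ^ s → r ≠ r0 → Nj r = 0 := by
    intro r hr hne
    have hrsub : Nj r ≤ ∑ x ∈ (Finset.range (p ^ s)).erase r0, Nj x :=
      Finset.single_le_sum (fun _ _ => Nat.zero_le _)
        (Finset.mem_erase.mpr ⟨hne, Finset.mem_range.mpr hr⟩)
    omega
  have hmem : ∀ a ∈ A, a % p ^ kk % p ^ s = r0 := by
    intro a ha
    by_contra hne
    have hja : a % p ^ kk < p ^ kk := Nat.mod_lt a hpk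
    have h0 : Nj (a % p ^ kk) = 0 := by
      rw [hconst' _ hja]
      exact hr0zero _ (Nat.mod_lt _ hps) hne
    have hmem' : a ∈ A.filter (fun m => m % p ^ kk = a % p ^ kk) :=
      Finset.mem_filter.mpr ⟨ha, rfl⟩
    have hpos : 0 < Nj (a % p ^ kk) := Finset.card_pos.mpr ⟨a, hmem'⟩
    omega
  set ia : ℕ → ℕ := fun a => a % p ^ kk / p ^ s with hia
  have hialt : ∀ a, ia a < p := by
    intro a
    rw [hia]
    rw [Nat.div_lt_iff_lt_mul hps]
    calc a % p ^ kk < p ^ kk := Nat.mod_lt a hpk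
      _ = p * p ^ s := by rw [hpks]; ring
  have hadecomp : ∀ a ∈ A, a % p ^ kk = r0 + ia a * p ^ s := by
    intro a ha
    have h1 : p ^ s * ia a + a % p ^ kk % p ^ s = a % p ^ kk := by
      rw [hia]; exact Nat.div_add_mod _ _
    rw [hmem a ha] at h1
    rw [← h1]; ring
  have hinj : ∀ a ∈ A, ∀ b ∈ A, ia a = ia b → a = b := by
    intro a ha b hb hab
    have hmodeq : a % p ^ kk = b % p ^ kk := by
      rw [hadecomp a ha, hadecomp b hb, hab]
    have hcard1 : Nj (a % p ^ kk) ≤ 1 := by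
      rw [hconst' _ (Nat.mod_lt a hpk), hmem a ha, hr0one]
    exact Finset.card_le_one.mp hcard1 a (Finset.mem_filter.mpr ⟨ha, rfl⟩) b
      (Finset.mem_filter.mpr ⟨hb, hmodeq.symm⟩)
  have himg : A.image ia = Finset.range p := by
    apply Finset.eq_of_subset_of_card_le
    · intro i hi
      obtain ⟨a, _, rfl⟩ := Finset.mem_image.mp hi
      exact Finset.mem_range.mpr (hialt a)
    · rw [Finset.card_range,
        Finset.card_image_of_injOn (fun a ha b hb h =>
          hinj a (by simpa using ha) b (by simpa using hb) h), hcard]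
  have hex : ∀ i : Fin p, ∃ a, a ∈ A ∧ ia a = (i : ℕ) := by
    intro i
    have hmem2 : (i : ℕ) ∈ A.image ia := by rw [himg]; exact Finset.mem_range.mpr i.isLt
    obtain ⟨a, ha, hia'⟩ := Finset.mem_image.mp hmem2
    exact ⟨a, ha, hia'⟩
  choose f hfA hfi using hex
  refine ⟨(r0 : ℤ), by positivity, s, fun i => ((f i / p ^ kk : ℕ) : ℤ), ?_⟩
  have hrep : ∀ i : Fin p,
      (r0 : ℤ) + (i : ℤ) * (p : ℤ) ^ s + ((f i / p ^ kk : ℕ) : ℤ) * (p : ℤ) ^ (s + 1)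
        = ((f i : ℕ) : ℤ) := by
    intro i
    have h1 : p ^ kk * (f i / p ^ kk) + f i % p ^ kk = f i := Nat.div_add_mod _ _
    have h2 := hadecomp (f i) (hfA i)
    rw [hfi i] at h2
    have h3 : (f i : ℕ) = r0 + (i : ℕ) * p ^ s + p ^ kk * (f i / p ^ kk) := by omega
    have h4 := congrArg (fun t : ℕ => (t : ℤ)) h3
    push_cast at h4
    rw [h4, ← hks]
    push_cast
    ring
  apply Finset.Subset.antisymm
  · intro z hz
    obtain ⟨a, ha, rfl⟩ := Finset.mem_image.mp hz
    refine Finset.mem_image.mpr ⟨⟨ia a, hialt a⟩, Finset.mem_univ _, ?_⟩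
    have hfa : f ⟨ia a, hialt a⟩ = a := hinj _ (hfA _) a ha (by rw [hfi])
    rw [hrep ⟨ia a, hialt a⟩, hfa]
  · intro z hz
    obtain ⟨i, _, rfl⟩ := Finset.mem_image.mp hz
    rw [hrep i]
    exact Finset.mem_image.mpr ⟨f i, hfA i, rfl⟩

theorem stmt7 (p : ℕ) (hp : p.Prime) (A : Finset ℕ) (hcard : A.card = p)
    (hform : ¬ ∃ (a : ℤ), 0 ≤ a ∧ ∃ (s : ℕ) (k : Fin p → ℤ),
      Finset.image (fun x : ℕ => (x : ℤ)) A =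
        Finset.image (fun i : Fin p => a + (i : ℤ) * p ^ s + k i * p ^ (s + 1))
          Finset.univ) :
    ∀ B : Set ℕ, (∃ n₀ : ℕ, ∀ n ≥ n₀, 1 ≤ rep (↑A) B n) →
      Filter.Tendsto (fun x : ℕ => (cnt (↑A) x : ℤ) * (cnt B x : ℤ) - (x : ℤ))
        Filter.atTop Filter.atTop := by
  intro B hB
  obtain ⟨n₀, hn₀⟩ := hB
  by_contra hnot
  rw [Filter.tendsto_atTop] at hnot
  push_neg at hnot
  obtain ⟨M, hMfreq⟩ := hnot
  rw [Filter.frequently_atTop] at hMfreq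
  haveI : DecidablePred (· ∈ B) := Classical.decPred _
  have hp2 := hp.two_le
  have hAne : A.Nonempty := by rw [← Finset.card_pos, hcard]; omega
  have hA2 : 1 < A.card := by rw [hcard]; exact hp.one_lt
  set amax := A.max' hAne with hamax
  -- Step 1: eventually rep = 1
  have hN1ex : ∃ N₁, ∀ n, N₁ ≤ n → rep ↑A B n = 1 := by
    by_contra hcon
    push_neg at hcon
    set E : Set ℕ := {n | n₀ ≤ n ∧ rep ↑A B n ≠ 1} with hE
    have hEinf : E.Infinite := by
      apply Set.infinite_of_forall_exists_gt
      intro a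
      obtain ⟨n, hn1, hn2⟩ := hcon (max (a + 1) n₀)
      refine ⟨n, ⟨le_trans (le_max_right _ _) hn1, hn2⟩, ?_⟩
      have := le_max_left (a + 1) n₀
      omega
    set K := (M + n₀ + 1).toNat with hK
    obtain ⟨t, htE, htK⟩ := hEinf.exists_subset_card_eq K
    obtain ⟨x, hx1, hx2⟩ := hMfreq (n₀ + t.sup id)
    have hxn₀ : n₀ ≤ x := by omega
    have htsub : t ⊆ Finset.Icc n₀ x := by
      intro n hn
      have h1 : n ∈ E := htE hn
      rw [hE] at h1
      have h2 : n ≤ t.sup id := by simpa using Finset.le_sup (f := id) hn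
      simp only [Finset.mem_Icc]
      exact ⟨h1.1, by omega⟩
    have hlow : ∀ n ∈ Finset.Icc n₀ x, (if n ∈ t then 2 else 1) ≤ rep ↑A B n := by
      intro n hn
      simp only [Finset.mem_Icc] at hn
      split_ifs with hnt
      · have h1 : n ∈ E := htE hnt
        have h1b : rep ↑A B n ≠ 1 := h1.2
        have h2 := hn₀ n hn.1
        omega
      · exact hn₀ n hn.1
    have hsum1 : ∑ n ∈ Finset.Icc n₀ x, (if n ∈ t then 2 else 1)
        ≤ ∑ n ∈ Finset.Icc n₀ x, rep ↑A B n := Finset.sum_le_sum hlow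
    have hsum2 : ∑ n ∈ Finset.Icc n₀ x, (if n ∈ t then 2 else 1) = (x + 1 - n₀) + K := by
      have hsp : ∀ n, (if n ∈ t then 2 else 1) = 1 + (if n ∈ t then 1 else 0) := by
        intro n; split_ifs <;> rfl
      simp_rw [hsp]
      rw [Finset.sum_add_distrib, Finset.sum_const, ← Finset.card_filter]
      have hft : (Finset.Icc n₀ x).filter (fun n => n ∈ t) = t := by
        apply Finset.Subset.antisymm
        · intro n hn; exact (Finset.mem_filter.mp hn).2
        · intro n hn; exact Finset.mem_filter.mpr ⟨htsub hn, hn⟩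
      rw [hft, htK, Nat.card_Icc, smul_eq_mul, mul_one]
    have hsum3 : ∑ n ∈ Finset.Icc n₀ x, rep ↑A B n ≤ ∑ n ∈ Finset.Iic x, rep ↑A B n := by
      apply Finset.sum_le_sum_of_subset
      intro n hn
      simp only [Finset.mem_Icc] at hn
      simp only [Finset.mem_Iic]
      omega
    have hsum4 := sum_rep_le A B x
    have hfin : (x + 1 - n₀) + K ≤ cnt ↑A x * cnt B x := by
      rw [← hsum2]
      exact le_trans hsum1 (le_trans hsum3 hsum4)
    have hlink : ((cnt ↑A x * cnt B x : ℕ) : ℤ) = (cnt ↑A x : ℤ) * (cnt B x : ℤ) := by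
      push_cast; ring
    have hKge : (M + n₀ + 1 : ℤ) ≤ (K : ℤ) := Int.self_le_toNat _
    omega
  obtain ⟨N₀, hrep0⟩ := hN1ex
  set N₁ := max N₀ (max n₀ amax) with hN₁
  have hrep1 : ∀ n, N₁ ≤ n → rep ↑A B n = 1 := fun n hn =>
    hrep0 n (le_trans (le_max_left _ _) hn)
  have hN₁amax : amax ≤ N₁ := le_trans (le_max_right _ _) (le_max_right _ _)
  -- Step 2: χ and tiling
  set χ : ℕ → ℕ := fun m => if m ∈ B then 1 else 0 with hχ
  have htile : ∀ n, N₁ ≤ n → ∑ a ∈ A, χ (n - a) = 1 := by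
    intro n hn
    have h1 := hrep1 n hn
    rw [rep_sum] at h1
    rw [← h1]
    refine Finset.sum_congr rfl fun a ha => ?_
    have hax : a ≤ n := le_trans (le_trans (A.le_max' a ha) hN₁amax) hn
    simp [hχ, hax]
  obtain ⟨T, hT1, M₀, hM₀R, hper⟩ := periodicity A hAne hA2 χ N₁ hN₁amax htile
  have hAM : A.max' hAne ≤ M₀ := le_trans hN₁amax hM₀R
  have htile' : ∀ n, M₀ ≤ n → ∑ a ∈ A, χ (n - a) = 1 := fun n h =>
    htile n (le_trans hM₀R h)
  have hTc : T = p * (∑ i ∈ Finset.range T, χ (M₀ + i)) := by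
    have h := tile_count A hAne χ T M₀ hAM htile' hper
    rwa [hcard] at h
  have hT0 : T ≠ 0 := by omega
  set e := T.factorization p with he
  have hpe_dvd : p ^ e ∣ T := Nat.ordProj_dvd T p
  have hnotdvd : ¬ p ^ (e + 1) ∣ T := Nat.pow_succ_factorization_not_dvd hT0 hp
  set W := (Finset.range T).filter (fun i => (M₀ + i) ∈ B) with hW
  have hcW : (∑ i ∈ Finset.range T, χ (M₀ + i)) = W.card := by
    rw [hW, Finset.card_filter]
  by_cases hvan : ∃ kk, 1 ≤ kk ∧ kk ≤ e ∧
      ∑ a ∈ A, (Complex.exp (2 * Real.pi * Complex.I / ((p ^ kk : ℕ) : ℂ))) ^ a = 0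
  · obtain ⟨kk, hk1, hke, hv⟩ := hvan
    exact hform (struct p hp A hcard kk hk1 hv)
  · push_neg at hvan
    have hWvan : ∀ kk, 1 ≤ kk → kk ≤ e →
        ∑ i ∈ W, (Complex.exp (2 * Real.pi * Complex.I / ((p ^ kk : ℕ) : ℂ))) ^ i = 0 := by
      intro kk hk1 hke
      set ζ := Complex.exp (2 * Real.pi * Complex.I / ((p ^ kk : ℕ) : ℂ)) with hζdef
      have hζ : IsPrimitiveRoot ζ (p ^ kk) := Complex.isPrimitiveRoot_exp _ (by positivity)
      have hζT : ζ ^ T = 1 := by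
        obtain ⟨u, hu⟩ := dvd_trans (pow_dvd_pow p hke) hpe_dvd
        rw [hu, pow_mul, hζ.pow_eq_one, one_pow]
      have hζ1 : ζ ≠ 1 := hζ.ne_one (Nat.one_lt_pow (by omega) hp.one_lt)
      have hid := tile_identity A hAne χ T M₀ hAM htile' hper ζ hζ1 hζT
      have hfA : ∑ a ∈ A, ζ ^ a ≠ 0 := hvan kk hk1 hke
      have hVW : ∑ i ∈ Finset.range T, (χ (M₀ + i) : ℂ) * ζ ^ (M₀ + i) = 0 := by
        rcases mul_eq_zero.mp hid with h | h
        · exact absurd h hfA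
        · exact h
      have hVW2 : ∑ i ∈ Finset.range T, (χ (M₀ + i) : ℂ) * ζ ^ (M₀ + i)
          = ζ ^ M₀ * ∑ i ∈ W, ζ ^ i := by
        calc ∑ i ∈ Finset.range T, (χ (M₀ + i) : ℂ) * ζ ^ (M₀ + i)
            = ∑ i ∈ Finset.range T, (if (M₀ + i) ∈ B then ζ ^ (M₀ + i) else 0) := by
              refine Finset.sum_congr rfl fun i _ => ?_
              simp only [hχ]
              split_ifs <;> simp
          _ = ∑ i ∈ W, ζ ^ (M₀ + i) := by rw [hW, Finset.sum_filter]
          _ = ∑ i ∈ W, ζ ^ M₀ * ζ ^ i :=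
              Finset.sum_congr rfl fun i _ => by rw [← pow_add]
          _ = ζ ^ M₀ * ∑ i ∈ W, ζ ^ i := by rw [Finset.mul_sum]
      rw [hVW2] at hVW
      rcases mul_eq_zero.mp hVW with h | h
      · exact absurd h (pow_ne_zero _ (Complex.exp_ne_zero _))
      · exact h
    have hdvdW : p ^ e ∣ W.card := chain_dvd p hp e W hWvan
    obtain ⟨u, hu⟩ := hdvdW
    apply hnotdvd
    rw [hTc, hcW, hu, pow_succ]
    exact ⟨u, by ring⟩
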